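/- arXiv:math/0703240 — 2 statements merged into one kernel-verified Lean document; each statement's English description precedes it below -/
import Mathlib

section
/- Let r : ℤ → ℝ satisfy ∑_{j∈ℤ} |r(j)| < ∞, and let 0 ≤ a < b be real numbers. Then (1/n)·∑_{i=⌊na⌋+1}^{⌊nb⌋} ∑_{j=⌊na⌋+1}^{⌊nb⌋} r(i − j) → (b − a)·∑_{j∈ℤ} r(j) as n → ∞. -/
open Filter Finset

lemma card_fiber (A B k : ℤ) :
    #{p ∈ Finset.Ioc A B ×ˢ Finset.Ioc A B | p.1 - p.2 = k} = (B - A - |k|).toNat := by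
  have h : #{p ∈ Finset.Ioc A B ×ˢ Finset.Ioc A B | p.1 - p.2 = k}
      = (Finset.Ioc (max A (A - k)) (min B (B - k))).card := by
    apply Finset.card_nbij' (fun p => p.2) (fun x => (x + k, x))
    · intro p hp
      simp only [Finset.mem_coe, Finset.mem_filter, Finset.mem_product, Finset.mem_Ioc] at hp
      simp only [Finset.mem_coe, Finset.mem_Ioc, max_lt_iff, le_min_iff]
      omega
    · intro x hx
      simp only [Finset.mem_coe, Finset.mem_Ioc, max_lt_iff, le_min_iff] at hx
      simp only [Finset.mem_coe, Finset.mem_filter, Finset.mem_product, Finset.mem_Ioc]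
      omega
    · rintro ⟨p1, p2⟩ hp
      simp only [Finset.mem_coe, Finset.mem_filter] at hp
      have h2 : p1 - p2 = k := hp.2
      simp only [Prod.mk.injEq]
      exact ⟨by omega, trivial⟩
    · intro x _; rfl
  rw [h, Int.card_Ioc]
  congr 1
  rcases abs_cases k with ⟨h1, h2⟩ | ⟨h1, h2⟩ <;> rw [h1] <;> omega

/-- Diagonal block limit: if `∑_{j∈ℤ} |r(j)| < ∞` and `0 ≤ a < b`, then
`(1/n) ∑_{i=⌊na⌋+1}^{⌊nb⌋} ∑_{j=⌊na⌋+1}^{⌊nb⌋} r(i−j) → (b−a) ∑_{j∈ℤ} r(j)`. -/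
theorem stmt_10 (r : ℤ → ℝ) (hr : Summable (fun j : ℤ => |r j|))
    (a b : ℝ) (ha : 0 ≤ a) (hab : a < b) :
    Tendsto
      (fun n : ℕ => (1 / (n : ℝ)) *
        ∑ i ∈ Finset.Ioc ⌊(n : ℝ) * a⌋ ⌊(n : ℝ) * b⌋,
          ∑ j ∈ Finset.Ioc ⌊(n : ℝ) * a⌋ ⌊(n : ℝ) * b⌋, r (i - j))
      atTop (nhds ((b - a) * ∑' j : ℤ, r j)) := by
  set N : ℕ → ℤ := fun n => ⌊(n : ℝ) * b⌋ - ⌊(n : ℝ) * a⌋ with hN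
  set g : ℕ → ℤ → ℝ := fun n k => (((N n - |k|).toNat : ℝ) / n) * r k with hg
  -- step 1: rewrite
  have key : ∀ n : ℕ, (1 / (n : ℝ)) *
      ∑ i ∈ Finset.Ioc ⌊(n : ℝ) * a⌋ ⌊(n : ℝ) * b⌋,
        ∑ j ∈ Finset.Ioc ⌊(n : ℝ) * a⌋ ⌊(n : ℝ) * b⌋, r (i - j) = ∑' k, g n k := by
    intro n
    set s := Finset.Ioc ⌊(n : ℝ) * a⌋ ⌊(n : ℝ) * b⌋ with hs
    have h1 : ∑ i ∈ s, ∑ j ∈ s, r (i - j)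
        = ∑ p ∈ s ×ˢ s, r (p.1 - p.2) := (Finset.sum_product s s (fun p => r (p.1 - p.2))).symm
    have h2 : ∑ p ∈ s ×ˢ s, r (p.1 - p.2)
        = ∑ k ∈ (s ×ˢ s).image (fun p => p.1 - p.2),
            (((N n - |k|).toNat : ℝ)) * r k := by
      rw [Finset.sum_comp (fun k => r k) (fun p : ℤ × ℤ => p.1 - p.2)]
      refine Finset.sum_congr rfl fun k _ => ?_
      rw [nsmul_eq_mul]
      congr 1
      rw [card_fiber]
    have h3 : ∑' k, g n k = ∑ k ∈ (s ×ˢ s).image (fun p => p.1 - p.2), g n k := by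
      apply tsum_eq_sum
      intro k hk
      have hc : (N n - |k|).toNat = 0 := by
        rw [← card_fiber ⌊(n : ℝ) * a⌋ ⌊(n : ℝ) * b⌋ k, Finset.card_eq_zero,
          Finset.filter_eq_empty_iff]
        intro p hp hpk
        exact hk (Finset.mem_image.2 ⟨p, hp, hpk⟩)
      simp [hg, hc]
    rw [h1, h2, h3, Finset.mul_sum]
    refine Finset.sum_congr rfl fun k _ => ?_
    simp only [hg]
    ring
  have hba : 0 < b - a := by linarith
  have hb : 0 < b := lt_of_le_of_lt ha hab
  -- step 2: dominated convergence
  have main : Tendsto (fun n => ∑' k, g n k) atTop (nhds (∑' k, (b - a) * r k)) := by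
    apply tendsto_tsum_of_dominated_convergence (bound := fun k => b * |r k|) (hr.mul_left b)
    · intro k
      have hq : Tendsto (fun n : ℕ => ((N n - |k|).toNat : ℝ) / n) atTop (nhds (b - a)) := by
        have hlow : Tendsto (fun n : ℕ => (b - a) - (1 + |(k : ℝ)|) * (1 / n)) atTop
            (nhds (b - a)) := by
          have := tendsto_one_div_atTop_nhds_zero_nat.const_mul (1 + |(k : ℝ)|)
          have h := (tendsto_const_nhds (x := b - a) (f := atTop (α := ℕ))).sub this
          simpa using h
        have hup : Tendsto (fun n : ℕ => (b - a) + 1 * (1 / n)) atTop (nhds (b - a)) := by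
          have := tendsto_one_div_atTop_nhds_zero_nat.const_mul (1 : ℝ)
          have h := (tendsto_const_nhds (x := b - a) (f := atTop (α := ℕ))).add this
          simpa using h
        apply tendsto_of_tendsto_of_tendsto_of_le_of_le' hlow hup
        · filter_upwards [eventually_ge_atTop 1] with n hn
          have hn0 : (0 : ℝ) < n := by exact_mod_cast hn
          have hself : ((N n - |k| : ℤ) : ℝ) ≤ ((N n - |k|).toNat : ℝ) := by
            exact_mod_cast Int.self_le_toNat _
          have hcast : ((N n - |k| : ℤ) : ℝ) = (⌊(n:ℝ)*b⌋ : ℝ) - (⌊(n:ℝ)*a⌋ : ℝ) - |(k:ℝ)| := by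
            simp only [hN]; push_cast; ring
          have hf1 : (n:ℝ)*b - 1 < (⌊(n:ℝ)*b⌋ : ℝ) := Int.sub_one_lt_floor _
          have hf2 : (⌊(n:ℝ)*a⌋ : ℝ) ≤ (n:ℝ)*a := Int.floor_le _
          rw [le_div_iff₀ hn0]
          have e : (b - a - (1 + |(k:ℝ)|) * (1 / n)) * n
              = (n:ℝ)*b - (n:ℝ)*a - (1 + |(k:ℝ)|) := by
            field_simp
          rw [e]
          linarith
        · filter_upwards [eventually_ge_atTop 1] with n hn
          have hn0 : (0 : ℝ) < n := by exact_mod_cast hn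
          have hNn : 0 ≤ N n := by
            simp only [hN, sub_nonneg]
            exact Int.floor_le_floor (by nlinarith)
          have hmono : (N n - |k|).toNat ≤ (N n).toNat :=
            Int.toNat_le_toNat (by have := abs_nonneg k; omega)
          have hc1 : ((N n - |k|).toNat : ℝ) ≤ ((N n).toNat : ℝ) := by exact_mod_cast hmono
          have hc2 : ((N n).toNat : ℝ) = (⌊(n:ℝ)*b⌋ : ℝ) - (⌊(n:ℝ)*a⌋ : ℝ) := by
            rw [show ((N n).toNat : ℝ) = ((N n : ℤ) : ℝ) by exact_mod_cast Int.toNat_of_nonneg hNn]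
            simp only [hN]; push_cast; ring
          have hf1 : (⌊(n:ℝ)*b⌋ : ℝ) ≤ (n:ℝ)*b := Int.floor_le _
          have hf2 : (n:ℝ)*a - 1 < (⌊(n:ℝ)*a⌋ : ℝ) := Int.sub_one_lt_floor _
          rw [div_le_iff₀ hn0]
          have e : (b - a + 1 * (1 / n)) * n = (n:ℝ)*b - (n:ℝ)*a + 1 := by
            field_simp
          rw [e]
          linarith
      have := hq.mul_const (r k)
      exact this
    · filter_upwards [eventually_ge_atTop 1] with n hn k
      have hn0 : (0 : ℝ) < n := by exact_mod_cast hn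
      have hfa : (0 : ℤ) ≤ ⌊(n : ℝ) * a⌋ := Int.floor_nonneg.2 (by positivity)
      have hfb : ((N n - |k|).toNat : ℝ) ≤ (n : ℝ) * b := by
        have h1 : (N n - |k|).toNat ≤ ⌊(n : ℝ) * b⌋.toNat := by
          apply Int.toNat_le_toNat
          have := abs_nonneg k
          simp only [hN]
          omega
        have hnb : (0 : ℤ) ≤ ⌊(n : ℝ) * b⌋ := Int.floor_nonneg.2 (by positivity)
        have h2 : (⌊(n : ℝ) * b⌋.toNat : ℝ) ≤ (n : ℝ) * b := by
          rw [show ((⌊(n : ℝ) * b⌋.toNat : ℝ)) = ((⌊(n : ℝ) * b⌋ : ℤ) : ℝ) by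
            exact_mod_cast Int.toNat_of_nonneg hnb]
          exact Int.floor_le _
        calc ((N n - |k|).toNat : ℝ) ≤ (⌊(n : ℝ) * b⌋.toNat : ℝ) := by exact_mod_cast h1
          _ ≤ (n : ℝ) * b := h2
      have : ‖g n k‖ = (((N n - |k|).toNat : ℝ) / n) * |r k| := by
        simp only [hg, norm_mul, Real.norm_eq_abs, abs_div, abs_abs]
        rw [abs_of_nonneg (by positivity : (0:ℝ) ≤ ((N n - |k|).toNat : ℝ)),
          abs_of_nonneg hn0.le]
      rw [this]
      apply mul_le_mul_of_nonneg_right _ (abs_nonneg _)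
      rw [div_le_iff₀ hn0]
      calc ((N n - |k|).toNat : ℝ) ≤ (n : ℝ) * b := hfb
        _ = b * n := by ring
  have := main.congr (fun n => (key n).symm)
  rwa [tsum_mul_left] at this
end

section
/- Let κ ≥ 1 be an odd integer, let ρ ∈ [−1,1], and let (X,Y) be centered jointly Gaussian random variables with E[X²] = E[Y²] = 1 and E[XY] = ρ (i.e. their joint law is the centered Gaussian measure on ℝ² with covariance matrix [[1,ρ],[ρ,1]]). Then |E[X^κ · Y^κ]| ≤ (2κ − 1)!!·|ρ|, where (2κ−1)!! = 1·3·5⋯(2κ−1) is the κth even Gaussian moment E[X^{2κ}]. -/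
open MeasureTheory ProbabilityTheory Polynomial Finset Filter Real
open scoped NNReal ENNReal

noncomputable section

namespace Stmt12

/-- Abstract Gaussian moment sequence. -/
def M : ℕ → ℝ
  | 0 => 1
  | 1 => 0
  | (n+2) => ((n : ℝ) + 1) * M n

lemma M_zero : M 0 = 1 := rfl
lemma M_one : M 1 = 0 := rfl
lemma M_add_two (n : ℕ) : M (n + 2) = ((n : ℝ) + 1) * M n := rfl

lemma M_even : ∀ k : ℕ, M (2 * k) = (Nat.doubleFactorial (2 * k - 1) : ℝ) := by
  intro k
  induction k with
  | zero => simp [M]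
  | succ j ih =>
    have h2 : 2 * (j + 1) = (2 * j) + 2 := by ring
    rw [h2, M_add_two, ih]
    rcases j with _ | i
    · norm_num [Nat.doubleFactorial, M_add_two, M_zero]
    · have h3 : 2 * (i + 1) + 2 - 1 = (2 * (i+1) - 1) + 2 := by omega
      rw [h3, Nat.doubleFactorial]
      push_cast
      have : ((2 * (i+1) - 1 : ℕ) : ℝ) = 2 * (i+1) - 1 := by
        push_cast [Nat.cast_sub (by omega : 1 ≤ 2 * (i+1))]; ring
      rw [this]; ring

lemma M_odd : ∀ k : ℕ, M (2 * k + 1) = 0 := by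
  intro k
  induction k with
  | zero => simp [M]
  | succ j ih =>
    have h2 : 2 * (j + 1) + 1 = (2 * j + 1) + 2 := by ring
    rw [h2, M_add_two, ih, mul_zero]

/-! ### Analysis: moments of the standard Gaussian -/

/-- unnormalized gaussian density -/
def e (x : ℝ) : ℝ := rexp (-x ^ 2 / 2)

lemma e_nonneg (x : ℝ) : 0 ≤ e x := (Real.exp_pos _).le

lemma continuous_e : Continuous e := by
  unfold e; fun_prop

lemma abs_pow_le (n : ℕ) (x : ℝ) : |x| ^ n ≤ (n.factorial : ℝ) * rexp |x| := by
  have h1 : |x| ^ n / (n.factorial : ℝ) ≤ rexp |x| := by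
    calc |x| ^ n / (n.factorial : ℝ)
        ≤ ∑ i ∈ range (n + 1), |x| ^ i / (i.factorial : ℝ) := by
          refine Finset.single_le_sum (f := fun i => |x| ^ i / (i.factorial : ℝ))
            (fun i _ => by positivity) (Finset.self_mem_range_succ n)
      _ ≤ rexp |x| := Real.sum_le_exp_of_nonneg (abs_nonneg x) (n + 1)
  have hf : (0:ℝ) < n.factorial := by positivity
  calc |x| ^ n = (n.factorial : ℝ) * (|x| ^ n / n.factorial) := by field_simp
    _ ≤ (n.factorial : ℝ) * rexp |x| := by
        exact mul_le_mul_of_nonneg_left h1 hf.le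

lemma integrable_pow_mul_e (n : ℕ) : Integrable (fun x : ℝ => x ^ n * e x) := by
  have hg : Integrable (fun x : ℝ => ((n.factorial : ℝ) * rexp 1) * rexp (-(1/4 : ℝ) * x ^ 2)) :=
    (integrable_exp_neg_mul_sq (by norm_num : (0:ℝ) < 1/4)).const_mul _
  refine hg.mono' ?_ ?_
  · exact ((continuous_pow n).mul continuous_e).aestronglyMeasurable
  · filter_upwards with x
    have h1 : ‖x ^ n * e x‖ = |x| ^ n * e x := by
      rw [norm_mul, norm_pow, Real.norm_eq_abs, Real.norm_eq_abs, abs_of_nonneg (e_nonneg x)]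
    rw [h1]
    have h2 : |x| ^ n * e x ≤ ((n.factorial : ℝ) * rexp |x|) * e x :=
      mul_le_mul_of_nonneg_right (abs_pow_le n x) (e_nonneg x)
    refine h2.trans ?_
    have h3 : rexp |x| * e x ≤ rexp 1 * rexp (-(1/4 : ℝ) * x ^ 2) := by
      unfold e
      rw [← Real.exp_add, ← Real.exp_add]
      apply Real.exp_le_exp.mpr
      have : |x| ≤ 1 + x ^ 2 / 4 := by
        nlinarith [sq_nonneg (|x| - 2), sq_abs x]
      nlinarith [sq_abs x]
    calc (n.factorial : ℝ) * rexp |x| * e x = (n.factorial : ℝ) * (rexp |x| * e x) := by ring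
      _ ≤ (n.factorial : ℝ) * (rexp 1 * rexp (-(1/4 : ℝ) * x ^ 2)) := by
          exact mul_le_mul_of_nonneg_left h3 (by positivity)
      _ = (n.factorial : ℝ) * rexp 1 * rexp (-(1/4 : ℝ) * x ^ 2) := by ring

lemma tendsto_pow_mul_e_atTop (n : ℕ) :
    Tendsto (fun x : ℝ => x ^ n * e x) atTop (nhds 0) := by
  have ho := rpow_mul_exp_neg_mul_sq_isLittleO_exp_neg (by norm_num : (0:ℝ) < 1/2) (n : ℝ)
  have heq : (fun x : ℝ => x ^ (n : ℝ) * rexp (-(1/2 : ℝ) * x ^ 2))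
      = fun x : ℝ => x ^ n * e x := by
    funext x
    rw [Real.rpow_natCast]
    unfold e
    ring_nf
  rw [heq] at ho
  refine ho.tendsto_zero_of_tendsto (y := 0) ?_
  have h1 : Tendsto (fun x : ℝ => -(1/2 : ℝ) * x) atTop atBot := by
    exact Tendsto.const_mul_atTop_of_neg (by norm_num : -(1/2 : ℝ) < 0) tendsto_id
  exact Real.tendsto_exp_atBot.comp h1

lemma tendsto_pow_mul_e_atBot (n : ℕ) :
    Tendsto (fun x : ℝ => x ^ n * e x) atBot (nhds 0) := by
  have h1 : Tendsto (fun x : ℝ => ((-1 : ℝ) ^ n) * (x ^ n * e x)) atTop (nhds 0) := by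
    simpa using (tendsto_pow_mul_e_atTop n).const_mul ((-1 : ℝ) ^ n)
  have h2 : Tendsto (fun x : ℝ => (-x) ^ n * e (-x)) atTop (nhds 0) := by
    refine h1.congr fun x => ?_
    unfold e
    rw [neg_pow]
    ring_nf
  have h3 := h2.comp tendsto_neg_atBot_atTop
  refine h3.congr fun x => ?_
  simp


lemma hasDerivAt_e (x : ℝ) : HasDerivAt e (-x * e x) x := by
  have h0 : HasDerivAt (fun y : ℝ => y ^ 2) (2 * x) x := by simpa using hasDerivAt_pow 2 x
  have h1 : HasDerivAt (fun y : ℝ => -y ^ 2 / 2) (-x) x := by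
    have := (h0.neg).div_const 2
    refine this.congr_deriv ?_
    ring
  have := h1.exp
  refine this.congr_deriv ?_
  unfold e
  ring

lemma integral_eq_of_hasDerivAt (f f' : ℝ → ℝ) (hd : ∀ x, HasDerivAt f (f' x) x)
    (hi : Integrable f') (ht : Tendsto f atTop (nhds 0)) (hb : Tendsto f atBot (nhds 0)) :
    ∫ x, f' x = 0 := by
  have h1 : ∫ x in Set.Ioi (0:ℝ), f' x = 0 - f 0 :=
    integral_Ioi_of_hasDerivAt_of_tendsto (hd 0).continuousAt.continuousWithinAt
      (fun x _ => hd x) hi.integrableOn ht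
  have h2 : ∫ x in Set.Iic (0:ℝ), f' x = f 0 - 0 :=
    integral_Iic_of_hasDerivAt_of_tendsto (hd 0).continuousAt.continuousWithinAt
      (fun x _ => hd x) hi.integrableOn hb
  rw [← integral_add_compl (measurableSet_Iic : MeasurableSet (Set.Iic (0:ℝ))) hi,
    Set.compl_Iic, h1, h2]
  ring

/-- unnormalized moments -/
def In (n : ℕ) : ℝ := ∫ x, x ^ n * e x

lemma In_rec (n : ℕ) : In (n + 2) = ((n : ℝ) + 1) * In n := by
  have key : ∫ x, (((n : ℝ) + 1) * (x ^ n * e x) - x ^ (n + 2) * e x) = 0 := by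
    apply integral_eq_of_hasDerivAt (fun x => x ^ (n+1) * e x)
    · intro x
      have := (hasDerivAt_pow (n+1) x).mul (hasDerivAt_e x)
      refine this.congr_deriv ?_
      push_cast
      ring
    · exact ((integrable_pow_mul_e n).const_mul _).sub (integrable_pow_mul_e (n+2))
    · exact tendsto_pow_mul_e_atTop (n+1)
    · exact tendsto_pow_mul_e_atBot (n+1)
  rw [integral_sub ((integrable_pow_mul_e n).const_mul _) (integrable_pow_mul_e (n+2)),
    integral_const_mul] at key
  unfold In
  linarith

lemma In_one : In 1 = 0 := by
  have key : ∫ x, x ^ 1 * e x = 0 := by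
    apply integral_eq_of_hasDerivAt (fun x => -e x)
    · intro x
      have := (hasDerivAt_e x).neg
      refine this.congr_deriv ?_
      ring
    · exact integrable_pow_mul_e 1
    · simpa using ((tendsto_pow_mul_e_atTop 0).neg).congr (fun x => by simp)
    · simpa using ((tendsto_pow_mul_e_atBot 0).neg).congr (fun x => by simp)
  exact key

lemma In_zero : In 0 = √(2 * π) := by
  have h : In 0 = ∫ x : ℝ, rexp (-(1/2 : ℝ) * x ^ 2) := by
    unfold In e
    congr 1
    funext x
    norm_num
    ring_nf
  rw [h, integral_gaussian]
  congr 1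
  ring

lemma sqrt_two_pi_pos : (0:ℝ) < √(2 * π) := Real.sqrt_pos.mpr (by positivity)

lemma pdf_eq (x : ℝ) : gaussianPDFReal 0 1 x = (√(2 * π))⁻¹ * e x := by
  unfold gaussianPDFReal e
  norm_num

lemma integral_gauss_eq (g : ℝ → ℝ) :
    ∫ x, g x ∂(gaussianReal 0 1) = ∫ x, gaussianPDFReal 0 1 x * g x := by
  rw [gaussianReal_of_var_ne_zero 0 one_ne_zero]
  have hpdf : gaussianPDF 0 1 = fun x => ((Real.toNNReal (gaussianPDFReal 0 1 x) : ℝ≥0) : ℝ≥0∞) :=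
    rfl
  rw [hpdf, integral_withDensity_eq_integral_smul (measurable_gaussianPDFReal 0 1).real_toNNReal g]
  congr 1
  funext x
  rw [NNReal.smul_def, Real.coe_toNNReal _ (gaussianPDFReal_nonneg 0 1 x), smul_eq_mul]

lemma integrable_pow_gauss (n : ℕ) : Integrable (fun x : ℝ => x ^ n) (gaussianReal 0 1) := by
  rw [gaussianReal_of_var_ne_zero 0 one_ne_zero]
  have hpdf : gaussianPDF 0 1 = fun x => ((Real.toNNReal (gaussianPDFReal 0 1 x) : ℝ≥0) : ℝ≥0∞) :=
    rfl
  rw [hpdf, integrable_withDensity_iff_integrable_smul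
    (measurable_gaussianPDFReal 0 1).real_toNNReal]
  have : (fun x : ℝ => (Real.toNNReal (gaussianPDFReal 0 1 x) : ℝ≥0) • (x ^ n))
      = fun x : ℝ => (√(2 * π))⁻¹ * (x ^ n * e x) := by
    funext x
    rw [NNReal.smul_def, Real.coe_toNNReal _ (gaussianPDFReal_nonneg 0 1 x), pdf_eq, smul_eq_mul]
    ring
  rw [this]
  exact (integrable_pow_mul_e n).const_mul _

lemma integral_pow_gauss (n : ℕ) : ∫ x, x ^ n ∂(gaussianReal 0 1) = M n := by
  have h : ∀ m : ℕ, ∫ x, x ^ m ∂(gaussianReal 0 1) = (√(2 * π))⁻¹ * In m := by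
    intro m
    rw [integral_gauss_eq]
    have : (fun x : ℝ => gaussianPDFReal 0 1 x * x ^ m)
        = fun x : ℝ => (√(2 * π))⁻¹ * (x ^ m * e x) := by
      funext x; rw [pdf_eq]; ring
    rw [this, integral_const_mul]
    rfl
  induction n using Nat.twoStepInduction with
  | zero => rw [h 0, In_zero, inv_mul_cancel₀ sqrt_two_pi_pos.ne', M_zero]
  | one => rw [h 1, In_one, M_one, mul_zero]
  | more n ih _ =>
    rw [h (n+2), In_rec, M_add_two, ← ih, h n]
    ring


lemma integrable_eval (p : ℝ[X]) :
    Integrable (fun x => eval x p) (gaussianReal 0 1) := by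
  induction p using Polynomial.induction_on' with
  | add p q hp hq => simpa [eval_add, Pi.add_def] using hp.add hq
  | monomial n c =>
    simpa [eval_monomial] using (integrable_pow_gauss n).const_mul c

/-- integral of a polynomial against the standard Gaussian -/
def gi (p : ℝ[X]) : ℝ := ∫ x, eval x p ∂(gaussianReal 0 1)

lemma gi_add (p q : ℝ[X]) : gi (p + q) = gi p + gi q := by
  unfold gi
  simp only [eval_add]
  exact integral_add (integrable_eval p) (integrable_eval q)

lemma gi_sub (p q : ℝ[X]) : gi (p - q) = gi p - gi q := by
  unfold gi
  simp only [eval_sub]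
  exact integral_sub (integrable_eval p) (integrable_eval q)

lemma gi_C_mul (c : ℝ) (p : ℝ[X]) : gi (C c * p) = c * gi p := by
  unfold gi
  simp only [eval_mul, eval_C]
  exact integral_const_mul c _

lemma gi_monomial (n : ℕ) (c : ℝ) : gi (monomial n c) = c * M n := by
  unfold gi
  simp only [eval_monomial]
  rw [integral_const_mul, integral_pow_gauss]

lemma gi_C (c : ℝ) : gi (C c) = c := by
  rw [← monomial_zero_left, gi_monomial, M_zero, mul_one]

lemma gi_one : gi 1 = 1 := by
  have := gi_monomial 0 1
  simpa [monomial_zero_left, M_zero] using this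

lemma gi_X_pow (n : ℕ) : gi (X ^ n) = M n := by
  rw [X_pow_eq_monomial, gi_monomial, one_mul]

lemma gi_sum {s : Finset ℕ} (f : ℕ → ℝ[X]) : gi (∑ i ∈ s, f i) = ∑ i ∈ s, gi (f i) := by
  unfold gi
  simp only [eval_finset_sum]
  exact integral_finset_sum s (fun i _ => integrable_eval (f i))

lemma gi_stein (p : ℝ[X]) : gi (X * p) = gi (derivative p) := by
  induction p using Polynomial.induction_on' with
  | add p q hp hq => rw [mul_add, gi_add, hp, hq, map_add, gi_add]
  | monomial n c =>
    rw [X_mul_monomial, derivative_monomial, gi_monomial, gi_monomial]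
    cases n with
    | zero => simp [M_one]
    | succ m =>
      rw [M_add_two]
      push_cast [Nat.add_sub_cancel]
      ring

/-- Hermite polynomials (probabilists'). -/
def H : ℕ → ℝ[X]
  | 0 => 1
  | (n+1) => X * H n - derivative (H n)

lemma H_zero : H 0 = 1 := rfl
lemma H_succ (n : ℕ) : H (n + 1) = X * H n - derivative (H n) := rfl

lemma derivH : ∀ n : ℕ, derivative (H n) = C (n : ℝ) * H (n - 1) := by
  intro n
  induction n using Nat.twoStepInduction with
  | zero => simp [H_zero]
  | one => simp [H_succ, H_zero]
  | more n ih ih1 =>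
    have ih1' : derivative (H (n + 1)) = C ((n : ℝ) + 1) * H n := by
      rw [ih1]; push_cast [Nat.add_sub_cancel]; ring_nf
    have hns : n + 2 - 1 = n + 1 := rfl
    have hc : ((n + 2 : ℕ) : ℝ) = (n : ℝ) + 2 := by push_cast; ring
    rw [hns, H_succ (n+1), map_sub, derivative_mul, derivative_X, one_mul, ih1',
      derivative_C_mul, ih, hc, H_succ n, ih]
    simp only [map_add, map_one, map_ofNat]
    ring

lemma X_mul_H (q : ℕ) : X * H q = H (q + 1) + C (q : ℝ) * H (q - 1) := by
  rw [H_succ, derivH]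
  ring

lemma gi_H_succ (q : ℕ) : gi (H (q + 1)) = 0 := by
  rw [H_succ, gi_sub, gi_stein, sub_self]

lemma gi_H_nonneg (q : ℕ) : 0 ≤ gi (H q) := by
  cases q with
  | zero => rw [H_zero, gi_one]; norm_num
  | succ m => rw [gi_H_succ]

lemma orth_rec (p q : ℕ) :
    gi (H (p + 1) * H (q + 1)) = ((q : ℝ) + 1) * gi (H p * H q) := by
  have h1 : H (p + 1) * H (q + 1)
      = X * (H p * H (q + 1)) - derivative (H p) * H (q + 1) := by
    rw [H_succ p]; ring
  have h2 : derivative (H p * H (q + 1))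
      = derivative (H p) * H (q + 1) + C ((q : ℝ) + 1) * (H p * H q) := by
    rw [derivative_mul, derivH (q + 1)]
    have : (q + 1 - 1 : ℕ) = q := rfl
    rw [this]
    push_cast
    ring
  rw [h1, gi_sub, gi_stein, h2, gi_add, gi_C_mul]
  ring

lemma orth_nonneg : ∀ p q : ℕ, 0 ≤ gi (H p * H q) := by
  intro p
  induction p with
  | zero =>
    intro q
    rw [H_zero, one_mul]
    exact gi_H_nonneg q
  | succ m ih =>
    intro q
    cases q with
    | zero =>
      rw [H_zero, mul_one, gi_H_succ]
    | succ r =>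
      rw [orth_rec]
      have := ih r
      positivity

lemma comp_eval (x ρ s : ℝ) (h : s ^ 2 = 1 - ρ ^ 2) :
    ∀ q : ℕ, gi ((H q).comp (C (ρ * x) + C s * X)) = ρ ^ q * eval x (H q) := by
  set L : ℝ[X] := C (ρ * x) + C s * X with hL
  have hdL : derivative L = C s := by
    simp [hL]
  intro q
  induction q using Nat.twoStepInduction with
  | zero => simp [H_zero, gi_one]
  | one =>
    have hH1 : H 1 = X := by rw [H_succ, H_zero]; simp
    rw [hH1, X_comp, hL, gi_add, gi_C_mul, gi_C,
      show (X : ℝ[X]) = X ^ 1 from (pow_one X).symm, gi_X_pow, M_one]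
    simp
  | more n ih ih1 =>
    have hd1 : derivative (H (n + 1)) = C ((n : ℝ) + 1) * H n := by
      rw [derivH]
      have : (n + 1 - 1 : ℕ) = n := rfl
      rw [this]
      push_cast
      ring
    have hA : ((X * H (n + 1)).comp L) = C (ρ * x) * ((H (n+1)).comp L)
        + C s * (X * ((H (n+1)).comp L)) := by
      rw [mul_comp, X_comp]
      ring
    have hderivA : derivative ((H (n+1)).comp L)
        = C (s * ((n : ℝ) + 1)) * ((H n).comp L) := by
      rw [derivative_comp, hdL, hd1, mul_comp, C_comp]
      rw [map_mul]
      ring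
    rw [show H (n + 2) = X * H (n + 1) - derivative (H (n + 1)) from rfl]
    rw [sub_comp, gi_sub, hA, gi_add, gi_C_mul, gi_C_mul, gi_stein, hderivA, gi_C_mul,
      hd1, mul_comp, C_comp, gi_C_mul, ih, ih1]
    simp only [eval_sub, eval_mul, eval_X, eval_C]
    set e1 := eval x (H (n + 1))
    set e0 := eval x (H n)
    linear_combination (((n : ℝ) + 1) * ρ ^ n * e0) * h

/-- Coefficients of the Hermite expansion of monomials. -/
def a : ℕ → ℕ → ℝ
  | 0, 0 => 1
  | 0, (_+1) => 0
  | (k+1), 0 => a k 1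
  | (k+1), (q+1) => a k q + ((q : ℝ) + 2) * a k (q + 2)

lemma a_succ_succ (k q : ℕ) : a (k+1) (q+1) = a k q + ((q : ℝ) + 2) * a k (q + 2) := rfl
lemma a_succ_zero (k : ℕ) : a (k+1) 0 = a k 1 := rfl

lemma a_nonneg : ∀ k q : ℕ, 0 ≤ a k q := by
  intro k
  induction k with
  | zero =>
    intro q
    cases q with
    | zero => norm_num [a]
    | succ r => norm_num [a]
  | succ m ih =>
    intro q
    cases q with
    | zero => rw [a_succ_zero]; exact ih 1
    | succ r =>
      rw [a_succ_succ]
      have h1 := ih r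
      have h2 := ih (r + 2)
      positivity

lemma a_zero_of_lt : ∀ k q : ℕ, k < q → a k q = 0 := by
  intro k
  induction k with
  | zero =>
    intro q hq
    cases q with
    | zero => omega
    | succ r => rfl
  | succ m ih =>
    intro q hq
    cases q with
    | zero => omega
    | succ r =>
      rw [a_succ_succ, ih r (by omega), ih (r+2) (by omega)]
      ring

lemma expand_step (k N : ℕ) (hkN : k < N) :
    X * (∑ q ∈ range N, C (a k q) * H q) = ∑ r ∈ range (N + 1), C (a (k+1) r) * H r := by
  obtain ⟨N', rfl⟩ : ∃ N', N = N' + 1 := ⟨N - 1, by omega⟩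
  -- expand the left side
  have hterm : ∀ q : ℕ, X * (C (a k q) * H q)
      = C (a k q) * H (q + 1) + C ((q : ℝ) * a k q) * H (q - 1) := by
    intro q
    have := X_mul_H q
    calc X * (C (a k q) * H q) = C (a k q) * (X * H q) := by ring
      _ = C (a k q) * (H (q + 1) + C (q : ℝ) * H (q - 1)) := by rw [this]
      _ = C (a k q) * H (q + 1) + C ((q : ℝ) * a k q) * H (q - 1) := by
          rw [map_mul]; ring
  rw [Finset.mul_sum]
  rw [Finset.sum_congr rfl (fun q _ => hterm q), Finset.sum_add_distrib]
  -- B : second sum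
  have hB : (∑ q ∈ range (N' + 1), C ((q : ℝ) * a k q) * H (q - 1))
      = ∑ j ∈ range (N' + 1 + 1), C (((j : ℝ) + 1) * a k (j + 1)) * H j := by
    have step1 : (∑ q ∈ range (N' + 1), C ((q : ℝ) * a k q) * H (q - 1))
        = ∑ i ∈ range N', C (((i : ℝ) + 1) * a k (i + 1)) * H i := by
      rw [Finset.sum_range_succ' (fun q => C ((q : ℝ) * a k q) * H (q - 1)) N']
      simp only [Nat.add_sub_cancel, Nat.cast_zero, zero_mul, map_zero, zero_mul, add_zero]
      apply Finset.sum_congr rfl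
      intro i _
      push_cast
      ring_nf
    have step2 : (∑ j ∈ range (N' + 1 + 1), C (((j : ℝ) + 1) * a k (j + 1)) * H j)
        = ∑ i ∈ range N', C (((i : ℝ) + 1) * a k (i + 1)) * H i := by
      symm
      apply Finset.sum_subset
      · intro i hi
        simp only [Finset.mem_range] at *
        omega
      · intro i _ hi
        simp only [Finset.mem_range, not_lt] at hi
        rw [a_zero_of_lt k (i + 1) (by omega), mul_zero, map_zero, zero_mul]
    rw [step1, step2]
  rw [hB]
  -- target: split
  rw [Finset.sum_range_succ' (fun r => C (a (k+1) r) * H r) (N' + 1)]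
  rw [Finset.sum_range_succ' (fun j => C (((j : ℝ) + 1) * a k (j + 1)) * H j) (N' + 1)]
  simp only [a_succ_succ, a_succ_zero]
  have hsum : ∀ i : ℕ, C (a k i + ((i : ℝ) + 2) * a k (i + 2)) * H (i + 1)
      = C (a k i) * H (i + 1) + C (((i : ℝ) + 1 + 1) * a k (i + 1 + 1)) * H (i + 1) := by
    intro i
    rw [map_add]
    -- push_cast not needed
    ring_nf
  rw [Finset.sum_congr rfl (fun i _ => hsum i), Finset.sum_add_distrib]
  simp only [one_mul, Nat.cast_zero, zero_add]
  push_cast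
  ring

lemma expand : ∀ k N : ℕ, k < N → (X : ℝ[X]) ^ k = ∑ q ∈ range N, C (a k q) * H q := by
  intro k
  induction k with
  | zero =>
    intro N hN
    rw [Finset.sum_eq_single_of_mem 0 (Finset.mem_range.mpr hN)]
    · norm_num [a, H_zero]
    · intro q _ hq
      obtain ⟨r, rfl⟩ : ∃ r, q = r + 1 := ⟨q - 1, by omega⟩
      have : a 0 (r + 1) = 0 := rfl
      rw [this, map_zero, zero_mul]
  | succ m ih =>
    intro N hN
    obtain ⟨N', rfl⟩ : ∃ N', N = N' + 1 := ⟨N - 1, by omega⟩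
    rw [pow_succ, mul_comm, ih N' (by omega), expand_step m N' (by omega)]


/-! ### Final assembly -/

lemma B_nonneg (k q : ℕ) : 0 ≤ gi ((X : ℝ[X]) ^ k * H q) := by
  rw [expand k (k+1) (Nat.lt_succ_self k), Finset.sum_mul, gi_sum]
  apply Finset.sum_nonneg
  intro p _
  rw [mul_assoc, gi_C_mul]
  exact mul_nonneg (a_nonneg k p) (orth_nonneg p q)

lemma sum_aB (k : ℕ) :
    ∑ q ∈ range (k + 1), a k q * gi ((X : ℝ[X]) ^ k * H q) = M (2 * k) := by
  have h1 : ∑ q ∈ range (k + 1), a k q * gi ((X : ℝ[X]) ^ k * H q)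
      = gi ((X : ℝ[X]) ^ k * ∑ q ∈ range (k + 1), C (a k q) * H q) := by
    rw [Finset.mul_sum, gi_sum]
    apply Finset.sum_congr rfl
    intro q _
    rw [show (X : ℝ[X]) ^ k * (C (a k q) * H q) = C (a k q) * ((X : ℝ[X]) ^ k * H q) by ring,
      gi_C_mul]
  rw [h1, ← expand k (k+1) (Nat.lt_succ_self k), ← pow_add, ← two_mul, gi_X_pow]

lemma B_zero_of_odd {k : ℕ} (hk : Odd k) : gi ((X : ℝ[X]) ^ k * H 0) = 0 := by
  obtain ⟨m, rfl⟩ := hk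
  rw [H_zero, mul_one, gi_X_pow, M_odd]

lemma integrable2 (k : ℕ) (ρ s : ℝ) (p : ℝ[X]) :
    Integrable (fun w : ℝ × ℝ => w.1 ^ k * eval (ρ * w.1 + s * w.2) p)
      ((gaussianReal 0 1).prod (gaussianReal 0 1)) := by
  induction p using Polynomial.induction_on' with
  | add p q hp hq => simpa [eval_add, mul_add, Pi.add_def] using hp.add hq
  | monomial n c =>
    have hfun : (fun w : ℝ × ℝ => w.1 ^ k * eval (ρ * w.1 + s * w.2) (monomial n c))
        = fun w : ℝ × ℝ => ∑ j ∈ range (n + 1),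
            (c * ρ ^ j * s ^ (n - j) * (n.choose j : ℝ)) * (w.1 ^ (k + j) * w.2 ^ (n - j)) := by
      funext w
      rw [eval_monomial, add_pow, Finset.mul_sum, Finset.mul_sum]
      apply Finset.sum_congr rfl
      intro j _
      rw [mul_pow, mul_pow, pow_add]
      ring
    rw [hfun]
    apply integrable_finset_sum
    intro j _
    exact (Integrable.mul_prod (integrable_pow_gauss (k + j)) (integrable_pow_gauss (n - j))).const_mul _

lemma key_integral (k : ℕ) (ρ s : ℝ) (hs : s ^ 2 = 1 - ρ ^ 2) (q : ℕ) :
    ∫ w : ℝ × ℝ, w.1 ^ k * eval (ρ * w.1 + s * w.2) (H q)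
        ∂((gaussianReal 0 1).prod (gaussianReal 0 1))
      = ρ ^ q * gi ((X : ℝ[X]) ^ k * H q) := by
  rw [integral_prod _ (integrable2 k ρ s (H q))]
  have hinner : ∀ x : ℝ, (∫ z, x ^ k * eval (ρ * x + s * z) (H q) ∂(gaussianReal 0 1))
      = x ^ k * (ρ ^ q * eval x (H q)) := by
    intro x
    rw [integral_const_mul]
    congr 1
    have hev : ∀ z : ℝ, eval (ρ * x + s * z) (H q)
        = eval z ((H q).comp (C (ρ * x) + C s * X)) := by
      intro z
      rw [eval_comp]
      simp
    rw [show (fun z => eval (ρ * x + s * z) (H q)) = fun z => eval z ((H q).comp (C (ρ * x) + C s * X)) from funext hev]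
    exact comp_eval x ρ s hs q
  have houter : (fun x : ℝ => ∫ z, x ^ k * eval (ρ * x + s * z) (H q) ∂(gaussianReal 0 1))
      = fun x : ℝ => ρ ^ q * eval x ((X : ℝ[X]) ^ k * H q) := by
    funext x
    rw [hinner x, eval_mul, eval_pow, eval_X]
    ring
  rw [show (fun x : ℝ => ∫ z, (fun w : ℝ × ℝ => w.1 ^ k * eval (ρ * w.1 + s * w.2) (H q)) (x, z)
      ∂(gaussianReal 0 1)) = fun x : ℝ => ∫ z, x ^ k * eval (ρ * x + s * z) (H q)
      ∂(gaussianReal 0 1) from rfl, houter, integral_const_mul]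
  rfl

end Stmt12

open Stmt12 Polynomial Finset in
/-- For odd `κ ≥ 1` and a centered Gaussian pair `(X,Y)` with unit variances and correlation `ρ`
(realized as the joint law of `(X, ρX + √(1−ρ²)Z)` for independent standard Gaussians `X, Z`),
one has `|E[X^κ Y^κ]| ≤ (2κ−1)‼ |ρ|`. -/
theorem stmt_12 (κ : ℕ) (hκ : 1 ≤ κ) (hodd : Odd κ) (ρ : ℝ) (hρ : ρ ∈ Set.Icc (-1 : ℝ) 1) :
    |∫ p : ℝ × ℝ, p.1 ^ κ * p.2 ^ κ
        ∂(((gaussianReal 0 1).prod (gaussianReal 0 1)).map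
            (fun q : ℝ × ℝ => (q.1, ρ * q.1 + Real.sqrt (1 - ρ ^ 2) * q.2)))|
      ≤ (Nat.doubleFactorial (2 * κ - 1) : ℝ) * |ρ| := by
  obtain ⟨hρl, hρr⟩ := hρ
  set s := Real.sqrt (1 - ρ ^ 2) with hs_def
  have h1ρ : 0 ≤ 1 - ρ ^ 2 := by nlinarith
  have hs2 : s ^ 2 = 1 - ρ ^ 2 := Real.sq_sqrt h1ρ
  have hρabs : |ρ| ≤ 1 := abs_le.mpr ⟨hρl, hρr⟩
  have hT : Measurable (fun q : ℝ × ℝ => (q.1, ρ * q.1 + s * q.2)) :=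
    measurable_fst.prodMk ((measurable_fst.const_mul ρ).add (measurable_snd.const_mul s))
  have hfm : AEStronglyMeasurable (fun p : ℝ × ℝ => p.1 ^ κ * p.2 ^ κ)
      (((gaussianReal 0 1).prod (gaussianReal 0 1)).map
        (fun q : ℝ × ℝ => (q.1, ρ * q.1 + s * q.2))) :=
    ((continuous_fst.pow κ).mul (continuous_snd.pow κ)).aestronglyMeasurable
  rw [integral_map hT.aemeasurable hfm]
  have hexp : ∀ y : ℝ, y ^ κ = ∑ q ∈ range (κ + 1), a κ q * eval y (H q) := by
    intro y
    have := congrArg (eval y) (expand κ (κ + 1) (Nat.lt_succ_self κ))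
    simpa [eval_pow, eval_finset_sum] using this
  have hfun : (fun w : ℝ × ℝ => w.1 ^ κ * (ρ * w.1 + s * w.2) ^ κ)
      = fun w : ℝ × ℝ => ∑ q ∈ range (κ + 1),
          a κ q * (w.1 ^ κ * eval (ρ * w.1 + s * w.2) (H q)) := by
    funext w
    rw [hexp (ρ * w.1 + s * w.2), Finset.mul_sum]
    apply Finset.sum_congr rfl
    intro q _
    ring
  have hval : (∫ w : ℝ × ℝ, w.1 ^ κ * (ρ * w.1 + s * w.2) ^ κ
        ∂((gaussianReal 0 1).prod (gaussianReal 0 1)))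
      = ∑ q ∈ range (κ + 1), a κ q * (ρ ^ q * gi ((X : ℝ[X]) ^ κ * H q)) := by
    rw [hfun, integral_finset_sum _ (fun q _ => (integrable2 κ ρ s (H q)).const_mul _)]
    apply Finset.sum_congr rfl
    intro q _
    rw [integral_const_mul, key_integral κ ρ s hs2 q]
  rw [show (∫ w : ℝ × ℝ, (fun p : ℝ × ℝ => p.1 ^ κ * p.2 ^ κ)
        ((fun q : ℝ × ℝ => (q.1, ρ * q.1 + s * q.2)) w)
        ∂((gaussianReal 0 1).prod (gaussianReal 0 1)))
      = ∫ w : ℝ × ℝ, w.1 ^ κ * (ρ * w.1 + s * w.2) ^ κ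
        ∂((gaussianReal 0 1).prod (gaussianReal 0 1)) from rfl, hval]
  have hBz : gi ((X : ℝ[X]) ^ κ * H 0) = 0 := B_zero_of_odd hodd
  calc |∑ q ∈ range (κ + 1), a κ q * (ρ ^ q * gi ((X : ℝ[X]) ^ κ * H q))|
      ≤ ∑ q ∈ range (κ + 1), |a κ q * (ρ ^ q * gi ((X : ℝ[X]) ^ κ * H q))| :=
        Finset.abs_sum_le_sum_abs _ _
    _ ≤ ∑ q ∈ range (κ + 1), (a κ q * gi ((X : ℝ[X]) ^ κ * H q)) * |ρ| := by
        apply Finset.sum_le_sum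
        intro q _
        rw [abs_mul, abs_mul, abs_of_nonneg (a_nonneg κ q), abs_of_nonneg (B_nonneg κ q)]
        cases q with
        | zero => rw [hBz]; simp
        | succ m =>
          have hx : |ρ ^ (m + 1)| ≤ |ρ| := by
            rw [abs_pow]
            calc |ρ| ^ (m + 1) ≤ |ρ| ^ 1 :=
                  pow_le_pow_of_le_one (abs_nonneg ρ) hρabs (by omega)
              _ = |ρ| := pow_one _
          have hab : 0 ≤ a κ (m + 1) * gi ((X : ℝ[X]) ^ κ * H (m + 1)) :=
            mul_nonneg (a_nonneg κ (m + 1)) (B_nonneg κ (m + 1))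
          calc a κ (m + 1) * (|ρ ^ (m + 1)| * gi ((X : ℝ[X]) ^ κ * H (m + 1)))
              = (a κ (m + 1) * gi ((X : ℝ[X]) ^ κ * H (m + 1))) * |ρ ^ (m + 1)| := by ring
            _ ≤ (a κ (m + 1) * gi ((X : ℝ[X]) ^ κ * H (m + 1))) * |ρ| :=
                mul_le_mul_of_nonneg_left hx hab
    _ = (∑ q ∈ range (κ + 1), a κ q * gi ((X : ℝ[X]) ^ κ * H q)) * |ρ| := by
        rw [← Finset.sum_mul]
    _ = M (2 * κ) * |ρ| := by rw [sum_aB]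
    _ = (Nat.doubleFactorial (2 * κ - 1) : ℝ) * |ρ| := by rw [M_even]

end
end
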